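/- (Coefficient-sum maximality of outer factors.) Let F be outer in H^∞_{L(H,K)}(𝔻) with Taylor coefficients F_j, and let G ∈ H^∞_{L(H,L)}(𝔻), with Taylor coefficients G_j, satisfy G*G = F*F a.e. on the unit circle. Then for every k ∈ ℕ₀, Σ_{i=0}^{k} G_i* G_i ≤ Σ_{i=0}^{k} F_i* F_i. More strongly, the (k+1)×(k+1) lower triangular block Toeplitz matrices 𝔉_k and 𝔊_k built from the respective Taylor coefficients satisfy 𝔊_k* 𝔊_k ≤ 𝔉_k* 𝔉_k. -/

import Mathlib

open scoped InnerProductSpace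
open ContinuousLinearMap

section

variable {H K L : Type*} [NormedAddCommGroup H] [InnerProductSpace ℂ H] [CompleteSpace H]
  [NormedAddCommGroup K] [InnerProductSpace ℂ K] [CompleteSpace K]
  [NormedAddCommGroup L] [InnerProductSpace ℂ L] [CompleteSpace L]

/-- `T` is the (bounded) lower triangular block Toeplitz operator
`T_F = (F_{i-j})_{i,j≥0} : ℓ²_H → ℓ²_K` with symbol coefficients `F_j`; boundedness of
`T` encodes that `F ∈ H^∞_{L(H,K)}(𝔻)`. -/
def IsToeplitzOf (F : ℕ → H →L[ℂ] K)
    (T : lp (fun _ : ℕ => H) 2 →L[ℂ] lp (fun _ : ℕ => K) 2) : Prop :=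
  ∀ (v : lp (fun _ : ℕ => H) 2) (i : ℕ),
    T v i = ∑ j ∈ Finset.range (i + 1), F (i - j) (v j)

/-- The quadratic form of a block matrix supported on `{0,…,k} × {0,…,k}`. -/
noncomputable def schurQF (k : ℕ) (S : ℕ → ℕ → H →L[ℂ] H) (v : ℕ → H) : ℝ :=
  ∑ i ∈ Finset.range (k + 1), ∑ j ∈ Finset.range (k + 1), (⟪S i j (v j), v i⟫_ℂ).re

/-- `S` is the Schur complement of `T* T` supported on rows and columns `{0,…,k}`:
the maximal positive operator matrix supported there with `T* T - S ≥ 0`. -/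
def IsSchurOfTT (T : lp (fun _ : ℕ => H) 2 →L[ℂ] lp (fun _ : ℕ => K) 2) (k : ℕ)
    (S : ℕ → ℕ → H →L[ℂ] H) : Prop :=
  (∀ i j, k < i ∨ k < j → S i j = 0) ∧ (∀ i j, (S i j).adjoint = S j i) ∧
    (∀ v, 0 ≤ schurQF k S v) ∧
    (∀ v : lp (fun _ : ℕ => H) 2, schurQF k S (fun n => v n) ≤ ‖T v‖ ^ 2) ∧
    ∀ X : ℕ → ℕ → H →L[ℂ] H, (∀ i j, k < i ∨ k < j → X i j = 0) →
      (∀ i j, (X i j).adjoint = X j i) → (∀ v, 0 ≤ schurQF k X v) →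
      (∀ v : lp (fun _ : ℕ => H) 2, schurQF k X (fun n => v n) ≤ ‖T v‖ ^ 2) →
      ∀ v, schurQF k X v ≤ schurQF k S v

end

open scoped ENNReal NNReal

namespace OCMaux

variable {E : Type*} [NormedAddCommGroup E] [InnerProductSpace ℂ E]

local notation "ℓ²(" E ")" => lp (fun _ : ℕ => E) 2

lemma summable_sq (f : ℓ²(E)) : Summable fun i => ‖f i‖ ^ 2 := by
  have h := (memℓp_gen_iff (p := 2) (by norm_num)).1 (lp.memℓp f)
  have : ∀ i : ℕ, ‖f i‖ ^ ((2:ℝ≥0∞)).toReal = ‖f i‖ ^ 2 := by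
    intro i
    rw [ENNReal.toReal_ofNat]
    rw [show ((2:ℝ)) = ((2:ℕ):ℝ) by norm_num, Real.rpow_natCast]
  simpa [this] using h

lemma norm_sq_eq (f : ℓ²(E)) : ‖f‖ ^ 2 = ∑' i, ‖f i‖ ^ 2 := by
  have h := lp.norm_rpow_eq_tsum (p := 2) (by norm_num) f
  have c : ∀ x : ℝ, x ^ ((2:ℝ≥0∞)).toReal = x ^ 2 := by
    intro x
    rw [ENNReal.toReal_ofNat, show ((2:ℝ)) = ((2:ℕ):ℝ) by norm_num, Real.rpow_natCast]
  rw [c] at h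
  simpa [c] using h

lemma memℓp_of_eventually_zero {f : ℕ → E} (n : ℕ) (h : ∀ i, n ≤ i → f i = 0) :
    Memℓp f 2 := by
  apply memℓp_gen
  apply summable_of_ne_finset_zero (s := Finset.range n)
  intro i hi
  rw [h i (by simpa using hi)]
  simp [Real.zero_rpow (by norm_num : ((2:ℝ≥0∞)).toReal ≠ 0)]

/-- make an `ℓ²` element from a function -/
def mk (f : ℕ → E) (h : Memℓp f 2) : ℓ²(E) := ⟨f, h⟩

@[simp] lemma mk_apply (f : ℕ → E) (h : Memℓp f 2) (i : ℕ) : (mk f h) i = f i := rfl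

lemma memℓp_btail (n : ℕ) (f : ℓ²(E)) : Memℓp (fun i => f (i + n)) 2 := by
  apply memℓp_gen
  have : Summable fun i : ℕ => ‖f (i + n)‖ ^ 2 := (summable_nat_add_iff n).2 (summable_sq f)
  have c : ∀ x : ℝ, 0 ≤ x → x ^ ((2:ℝ≥0∞)).toReal = x ^ 2 := by
    intro x hx
    rw [ENNReal.toReal_ofNat, show ((2:ℝ)) = ((2:ℕ):ℝ) by norm_num, Real.rpow_natCast]
  simpa [fun i : ℕ => c ‖f (i + n)‖ (norm_nonneg _)] using this

/-- backward shift by `n` -/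
def btail (n : ℕ) (f : ℓ²(E)) : ℓ²(E) := mk (fun i => f (i + n)) (memℓp_btail n f)

@[simp] lemma btail_apply (n : ℕ) (f : ℓ²(E)) (i : ℕ) : btail n f i = f (i + n) := rfl

lemma norm_sq_split (n : ℕ) (f : ℓ²(E)) :
    ‖f‖ ^ 2 = (∑ l ∈ Finset.range n, ‖f l‖ ^ 2) + ‖btail n f‖ ^ 2 := by
  rw [norm_sq_eq f, norm_sq_eq (btail n f)]
  have := Summable.sum_add_tsum_nat_add (f := fun i => ‖f i‖ ^ 2) n (summable_sq f)
  simp only [btail_apply]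
  linarith


lemma btail_sub (n : ℕ) (f g : ℓ²(E)) : btail n (f - g) = btail n f - btail n g := by
  apply lp.ext
  funext i
  simp [btail, lp.coeFn_sub]

lemma norm_btail_le (n : ℕ) (f : ℓ²(E)) : ‖btail n f‖ ≤ ‖f‖ := by
  rw [← pow_le_pow_iff_left₀ (norm_nonneg _) (norm_nonneg _) (two_ne_zero)]
  rw [norm_sq_split n f]
  have : 0 ≤ ∑ l ∈ Finset.range n, ‖f l‖ ^ 2 :=
    Finset.sum_nonneg fun _ _ => sq_nonneg _
  linarith

lemma btail_btail (n m : ℕ) (f : ℓ²(E)) : btail n (btail m f) = btail (m + n) f := by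
  apply lp.ext
  funext i
  simp only [btail, mk_apply]
  exact congrArg (⇑f) (by omega)

/-- forward shift by `n` -/
def fshift (n : ℕ) (f : ℓ²(E)) : ℓ²(E) :=
  mk (fun i => if h : n ≤ i then f (i - n) else 0) (by
    apply memℓp_gen
    have hs : Summable fun i : ℕ =>
        ‖(fun j => if h : n ≤ j then f (j - n) else 0) (i + n)‖ ^ ((2:ℝ≥0∞)).toReal := by
      have : ∀ i : ℕ, (fun j => if h : n ≤ j then f (j - n) else 0) (i + n) = f i := by
        intro i; simp only []
        rw [dif_pos (by omega : n ≤ i + n), Nat.add_sub_cancel]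
      simp only [this]
      exact (memℓp_gen_iff (p := 2) (by norm_num)).1 (lp.memℓp f)
    have := (summable_nat_add_iff (f := fun i : ℕ =>
      ‖(fun j => if h : n ≤ j then f (j - n) else 0) i‖ ^ ((2:ℝ≥0∞)).toReal) n).1 hs
    exact this)

@[simp] lemma fshift_apply (n : ℕ) (f : ℓ²(E)) (i : ℕ) :
    fshift n f i = if h : n ≤ i then f (i - n) else 0 := rfl

/-- truncation of a plain sequence to coordinates `≤ k` -/
def trunc (k : ℕ) (v : ℕ → E) : ℓ²(E) :=
  mk (fun i => if i ≤ k then v i else 0)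
    (memℓp_of_eventually_zero (k + 1) fun i hi => if_neg (by omega))

@[simp] lemma trunc_apply (k : ℕ) (v : ℕ → E) (i : ℕ) :
    trunc k v i = if i ≤ k then v i else 0 := rfl

/-- inclusion of `E` in coordinate `0` as a continuous linear map. -/
noncomputable def J0 : E →L[ℂ] ℓ²(E) :=
  LinearMap.mkContinuous
    { toFun := fun x => lp.single 2 0 x
      map_add' := fun x y => by
        apply lp.ext
        funext j
        simp only [lp.coeFn_add, Pi.add_apply, lp.single_apply]
        by_cases h : j = 0
        · subst h; simp
        · simp [h]
      map_smul' := fun c x => by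
        simpa using (lp.single_smul 2 (0 : ℕ) x c).symm }
    1
    (fun x => by
      simpa using (lp.norm_single (p := 2) (by norm_num)
        (fun _ : ℕ => x) 0).le)

@[simp] lemma J0_apply (x : E) (j : ℕ) :
    (J0 x : ℓ²(E)) j = if j = 0 then x else 0 := by
  change (lp.single 2 0 x : ℓ²(E)) j = _
  rcases eq_or_ne j 0 with h | h
  · subst h; simp [lp.single_apply_self]
  · simp [lp.single_apply_ne _ _ _ h, h]


end OCMaux

section

variable {H K L : Type*} [NormedAddCommGroup H] [InnerProductSpace ℂ H] [CompleteSpace H]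
  [NormedAddCommGroup K] [InnerProductSpace ℂ K] [CompleteSpace K]
  [NormedAddCommGroup L] [InnerProductSpace ℂ L] [CompleteSpace L]

open OCMaux

lemma schurQF_zero (S : ℕ → ℕ → H →L[ℂ] H) (v : ℕ → H) :
    schurQF 0 S v = (⟪S 0 0 (v 0), v 0⟫_ℂ).re := by
  simp [schurQF]

/-- Toeplitz operators intertwine backward shifts on sequences vanishing at `0`. -/
lemma toeplitz_btail {F : ℕ → H →L[ℂ] K}
    {TF : lp (fun _ : ℕ => H) 2 →L[ℂ] lp (fun _ : ℕ => K) 2}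
    (hTF : IsToeplitzOf F TF) (w : lp (fun _ : ℕ => H) 2) (hw : w 0 = 0) :
    btail 1 (TF w) = TF (btail 1 w) := by
  apply lp.ext
  funext m
  have h1 : (btail 1 (TF w) : ℕ → K) m = TF w (m + 1) := rfl
  rw [h1, hTF w (m + 1), hTF (btail 1 w) m]
  rw [Finset.sum_range_succ' (fun j => F (m + 1 - j) (w j)) (m + 1)]
  have hz : F (m + 1 - 0) (w 0) = 0 := by rw [hw, map_zero]
  rw [hz, add_zero]
  refine Finset.sum_congr rfl fun i _ => ?_
  have : m + 1 - (i + 1) = m - i := by omega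
  rw [this]
  rfl


/-- The closure of the range of `TF`. -/
noncomputable def ranCl (TF : lp (fun _ : ℕ => H) 2 →L[ℂ] lp (fun _ : ℕ => K) 2) :
    Submodule ℂ (lp (fun _ : ℕ => K) 2) :=
  (LinearMap.range (TF : lp (fun _ : ℕ => H) 2 →ₗ[ℂ] lp (fun _ : ℕ => K) 2)).topologicalClosure

lemma mem_ranCl_of_range {TF : lp (fun _ : ℕ => H) 2 →L[ℂ] lp (fun _ : ℕ => K) 2}
    (f : lp (fun _ : ℕ => H) 2) : TF f ∈ ranCl TF :=
  Submodule.le_topologicalClosure _ ⟨f, rfl⟩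

lemma mem_ranCl_iff {TF : lp (fun _ : ℕ => H) 2 →L[ℂ] lp (fun _ : ℕ => K) 2}
    {z : lp (fun _ : ℕ => K) 2} :
    z ∈ ranCl TF ↔ ∀ ε > (0:ℝ), ∃ f, ‖z - TF f‖ < ε := by
  constructor
  · intro hz ε hε
    rw [ranCl, ← SetLike.mem_coe, Submodule.topologicalClosure_coe,
      Metric.mem_closure_iff] at hz
    obtain ⟨y, hy, hd⟩ := hz ε hε
    obtain ⟨f, rfl⟩ := LinearMap.mem_range.1 hy
    exact ⟨f, by rwa [← dist_eq_norm]⟩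
  · intro h
    rw [ranCl, ← SetLike.mem_coe, Submodule.topologicalClosure_coe,
      Metric.mem_closure_iff]
    intro ε hε
    obtain ⟨f, hf⟩ := h ε hε
    exact ⟨TF f, ⟨f, rfl⟩, by rwa [dist_eq_norm]⟩

set_option maxHeartbeats 2000000 in
/-- Key consequence of outerness: backward-shifted tails of elements of the range of `TF`
stay in the closure of the range. -/
lemma outer_tail_mem {F : ℕ → H →L[ℂ] K}
    {TF : lp (fun _ : ℕ => H) 2 →L[ℂ] lp (fun _ : ℕ => K) 2}
    (hTF : IsToeplitzOf F TF)
    (houter : IsSchurOfTT TF 0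
      (fun i j => if i = 0 ∧ j = 0 then (F 0).adjoint ∘L F 0 else 0)) :
    ∀ (n : ℕ) (f : lp (fun _ : ℕ => H) 2), btail n (TF f) ∈ ranCl TF := by
  classical
  -- the subspace of sequences vanishing at 0
  let W0 : Submodule ℂ (lp (fun _ : ℕ => H) 2) :=
    { carrier := {w | w 0 = 0}
      add_mem' := fun {a b} ha hb => by
        simp only [Set.mem_setOf_eq] at *
        rw [lp.coeFn_add, Pi.add_apply, ha, hb, add_zero]
      zero_mem' := by simp only [Set.mem_setOf_eq]; rfl
      smul_mem' := fun c {a} ha => by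
        simp only [Set.mem_setOf_eq] at *
        rw [lp.coeFn_smul, Pi.smul_apply, ha, smul_zero] }
  have hW0 : ∀ w : lp (fun _ : ℕ => H) 2, w ∈ W0 ↔ w 0 = 0 := fun w => Iff.rfl
  let M : Submodule ℂ (lp (fun _ : ℕ => K) 2) :=
    (W0.map (TF : lp (fun _ : ℕ => H) 2 →ₗ[ℂ] lp (fun _ : ℕ => K) 2)).topologicalClosure
  haveI : CompleteSpace M :=
    (W0.map (TF : lp (fun _ : ℕ => H) 2 →ₗ[ℂ] lp (fun _ : ℕ => K) 2)).isClosed_topologicalClosure.completeSpace_coe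
  haveI : CompleteSpace (Mᗮ : Submodule ℂ (lp (fun _ : ℕ => K) 2)) :=
    (Submodule.isClosed_orthogonal M).completeSpace_coe
  set P : lp (fun _ : ℕ => K) 2 →L[ℂ] Mᗮ := Submodule.orthogonalProjectionOnto Mᗮ with hP
  set A : H →L[ℂ] Mᗮ := P ∘L (TF ∘L J0) with hA
  -- TF maps W0 into the kernel of P
  have hker : ∀ w ∈ W0, P (TF w) = 0 := by
    intro w hw
    rw [hP, Submodule.orthogonalProjectionOnto_eq_zero_iff]
    exact M.le_orthogonal_orthogonal
      (Submodule.le_topologicalClosure _ (Submodule.mem_map_of_mem hw))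
  -- key identity : A (v 0) = P (TF v)
  have hAeq : ∀ v : lp (fun _ : ℕ => H) 2, A (v 0) = P (TF v) := by
    intro v
    have hw : v - J0 (v 0) ∈ W0 := by
      rw [hW0, lp.coeFn_sub, Pi.sub_apply, J0_apply, if_pos rfl, sub_self]
    have : TF v = TF (J0 (v 0)) + TF (v - J0 (v 0)) := by
      rw [← map_add]; congr 1; abel
    rw [this, map_add, hker _ hw, add_zero]
    rfl
  -- outerness gives ‖A x‖ ≤ ‖F 0 x‖
  have hAbound : ∀ x : H, ‖A x‖ ≤ ‖F 0 x‖ := by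
    intro x
    set X : ℕ → ℕ → H →L[ℂ] H :=
      fun i j => if i = 0 ∧ j = 0 then ContinuousLinearMap.adjoint A ∘L A else 0 with hX
    have hXq : ∀ w : ℕ → H, schurQF 0 X w = ‖A (w 0)‖ ^ 2 := by
      intro w
      rw [schurQF_zero]
      simp only [hX, and_self, if_pos]
      rw [ContinuousLinearMap.comp_apply]
      have h := ContinuousLinearMap.adjoint_inner_left A (w 0) (A (w 0))
      rw [show (⟪(ContinuousLinearMap.adjoint A) (A (w 0)), w 0⟫_ℂ).re
          = RCLike.re ⟪(ContinuousLinearMap.adjoint A) (A (w 0)), w 0⟫_ℂ from rfl, h,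
        inner_self_eq_norm_sq]
    have c1 : ∀ i j, 0 < i ∨ 0 < j → X i j = 0 := by
      intro i j hij
      simp only [hX]
      rw [if_neg]
      rintro ⟨h1, h2⟩
      rcases hij with hi | hj
      · omega
      · omega
    have c2 : ∀ i j, (X i j).adjoint = X j i := by
      intro i j
      simp only [hX]
      by_cases h : i = 0 ∧ j = 0
      · rw [if_pos h, if_pos ⟨h.2, h.1⟩, ContinuousLinearMap.adjoint_comp,
          ContinuousLinearMap.adjoint_adjoint]
      · rw [if_neg h, if_neg (by tauto)]
        exact map_zero _
    have c3 : ∀ w, 0 ≤ schurQF 0 X w := fun w => by rw [hXq]; positivity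
    have c4 : ∀ v : lp (fun _ : ℕ => H) 2, schurQF 0 X (fun n => v n) ≤ ‖TF v‖ ^ 2 := by
      intro v
      rw [hXq]
      have h2 : ‖P (TF v)‖ ≤ ‖TF v‖ := by
        calc ‖P (TF v)‖ ≤ ‖P‖ * ‖TF v‖ := P.le_opNorm _
          _ ≤ 1 * ‖TF v‖ :=
              mul_le_mul_of_nonneg_right (Submodule.orthogonalProjectionOnto_norm_le Mᗮ) (norm_nonneg _)
          _ = ‖TF v‖ := one_mul _
      have h1 : A ((fun n => v n) 0) = P (TF v) := hAeq v
      rw [h1]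
      exact pow_le_pow_left₀ (norm_nonneg _) h2 2
    have hmax := houter.2.2.2.2 X c1 c2 c3 c4 (fun _ => x)
    rw [hXq, schurQF_zero] at hmax
    simp only [and_self, if_pos, ContinuousLinearMap.comp_apply] at hmax
    rw [show (⟪(F 0).adjoint ((F 0) x), x⟫_ℂ).re
        = RCLike.re ⟪(F 0).adjoint ((F 0) x), x⟫_ℂ from rfl,
      ContinuousLinearMap.adjoint_inner_left, inner_self_eq_norm_sq] at hmax
    exact (pow_le_pow_iff_left₀ (norm_nonneg _) (norm_nonneg _) two_ne_zero).1 hmax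
  -- zeroth coordinate of TF (J0 x)
  have hz0 : ∀ x : H, (TF (J0 x) : ℕ → K) 0 = F 0 x := by
    intro x
    rw [hTF (J0 x) 0, Finset.sum_range_one]
    simp [J0_apply]
  -- key2 : the backward shift of TF (J0 x) lies in the closed range
  have key2 : ∀ x : H, btail 1 (TF (J0 x)) ∈ ranCl TF := by
    intro x
    rw [mem_ranCl_iff]
    intro ε hε
    set z : lp (fun _ : ℕ => K) 2 := TF (J0 x) with hzdef
    set C : ℝ := ‖F 0 x‖ with hCdef
    have hCnn : (0:ℝ) ≤ C := norm_nonneg _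
    set δ : ℝ := min (ε ^ 2 / (2 * C + 2)) 1 with hδdef
    have hδpos : 0 < δ := lt_min (div_pos (by positivity) (by linarith)) one_pos
    have hδ1 : δ ≤ 1 := min_le_right _ _
    have hδ2 : δ ≤ ε ^ 2 / (2 * C + 2) := min_le_left _ _
    have hPz : ‖(P z : lp (fun _ : ℕ => K) 2)‖ ≤ C := by
      have h := hAbound x
      have hAx : A x = P z := rfl
      rw [hAx] at h
      exact h
    have hval : (P z : lp (fun _ : ℕ => K) 2)
        = z - (Submodule.orthogonalProjectionOnto M z : lp (fun _ : ℕ => K) 2) :=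
      Submodule.starProjection_orthogonal_val z
    have hmem : ((Submodule.orthogonalProjectionOnto M z : lp (fun _ : ℕ => K) 2)) ∈
        closure ((W0.map (TF : lp (fun _ : ℕ => H) 2 →ₗ[ℂ] lp (fun _ : ℕ => K) 2))
          : Set (lp (fun _ : ℕ => K) 2)) := by
      rw [← Submodule.topologicalClosure_coe]
      exact SetLike.coe_mem _
    rw [Metric.mem_closure_iff] at hmem
    obtain ⟨y, hy, hdy⟩ := hmem δ hδpos
    obtain ⟨w, hwW0, hwy⟩ := Submodule.mem_map.1 hy
    have hwy' : TF w = y := hwy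
    have hw0 : (w : ℕ → H) 0 = 0 := (hW0 w).1 hwW0
    have hdy' : ‖(Submodule.orthogonalProjectionOnto M z : lp (fun _ : ℕ => K) 2) - TF w‖ < δ := by
      rw [hwy', ← dist_eq_norm]
      exact hdy
    have h3 : ‖z - TF w‖ ≤ C + δ := by
      have hsum : z - TF w = (P z : lp (fun _ : ℕ => K) 2)
          + ((Submodule.orthogonalProjectionOnto M z : lp (fun _ : ℕ => K) 2) - TF w) := by
        rw [hval]; abel
      rw [hsum]
      exact (norm_add_le _ _).trans (by linarith [hdy'.le, hPz])
    have hsplit := norm_sq_split 1 (z - TF w)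
    rw [Finset.sum_range_one] at hsplit
    have hcoord : (z - TF w : lp (fun _ : ℕ => K) 2) 0 = F 0 x := by
      rw [lp.coeFn_sub, Pi.sub_apply, hz0 x, hTF w 0, Finset.sum_range_one]
      rw [hw0, map_zero, sub_zero]
    have htail : btail 1 (z - TF w) = btail 1 z - TF (btail 1 w) := by
      rw [btail_sub, toeplitz_btail hTF w hw0]
    have hb2 : ‖btail 1 z - TF (btail 1 w)‖ ^ 2 < ε ^ 2 := by
      have h4 : ‖z - TF w‖ ^ 2 ≤ (C + δ) ^ 2 := pow_le_pow_left₀ (norm_nonneg _) h3 2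
      rw [hsplit, hcoord, htail, ← hCdef] at h4
      have hfrac : (2 * C + 1) * δ < ε ^ 2 := by
        have h5 : (2 * C + 1) * δ ≤ (2 * C + 1) * (ε ^ 2 / (2 * C + 2)) :=
          mul_le_mul_of_nonneg_left hδ2 (by linarith)
        have h6 : (2 * C + 1) * (ε ^ 2 / (2 * C + 2)) < ε ^ 2 := by
          rw [mul_div_assoc', div_lt_iff₀ (by linarith)]
          nlinarith [sq_nonneg ε, pow_pos hε 2]
        linarith
      nlinarith [sq_nonneg δ, hδpos, hδ1]
    refine ⟨btail 1 w, ?_⟩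
    exact lt_of_pow_lt_pow_left₀ 2 hε.le hb2
  -- key3 : backward shift of arbitrary range elements
  have key3 : ∀ f : lp (fun _ : ℕ => H) 2, btail 1 (TF f) ∈ ranCl TF := by
    intro f
    have hw0 : (f - J0 (f 0)) 0 = (0 : H) := by
      rw [lp.coeFn_sub, Pi.sub_apply, J0_apply, if_pos rfl, sub_self]
    have h1 : btail 1 (TF f) - btail 1 (TF (J0 (f 0)))
        = TF (btail 1 (f - J0 (f 0))) := by
      rw [← btail_sub, ← map_sub, toeplitz_btail hTF _ hw0]
    have h2 : btail 1 (TF f) = btail 1 (TF (J0 (f 0)))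
        + TF (btail 1 (f - J0 (f 0))) := by
      rw [← h1]; abel
    rw [h2]
    exact (ranCl TF).add_mem (key2 _) (mem_ranCl_of_range _)
  -- key4 : the closed range is invariant under the backward shift
  have key4 : ∀ r, r ∈ ranCl TF → btail 1 r ∈ ranCl TF := by
    intro r hr
    have hcl : btail 1 r ∈ closure ((ranCl TF) : Set (lp (fun _ : ℕ => K) 2)) := by
      rw [Metric.mem_closure_iff]
      intro ε hε
      obtain ⟨f, hf⟩ := mem_ranCl_iff.1 hr ε hε
      refine ⟨btail 1 (TF f), key3 f, ?_⟩
      rw [dist_eq_norm, ← btail_sub]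
      exact lt_of_le_of_lt (norm_btail_le 1 _) hf
    rwa [IsClosed.closure_eq] at hcl
    exact Submodule.isClosed_topologicalClosure _
  -- conclusion by induction
  intro n f
  induction n with
  | zero =>
      have h0 : btail 0 (TF f) = TF f := by
        apply lp.ext
        funext i
        simp [btail]
      rw [h0]
      exact mem_ranCl_of_range f
  | succ n ih =>
      rw [← btail_btail 1 n (TF f)]
      exact key4 _ ih


lemma norms_eq {TF : lp (fun _ : ℕ => H) 2 →L[ℂ] lp (fun _ : ℕ => K) 2}
    {TG : lp (fun _ : ℕ => H) 2 →L[ℂ] lp (fun _ : ℕ => L) 2}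
    (heq : TF.adjoint ∘L TF = TG.adjoint ∘L TG) (v : lp (fun _ : ℕ => H) 2) :
    ‖TF v‖ ^ 2 = ‖TG v‖ ^ 2 := by
  have hcomp : TF.adjoint (TF v) = TG.adjoint (TG v) := by
    have := ContinuousLinearMap.ext_iff.1 heq v
    simpa using this
  have h1 : ⟪TF v, TF v⟫_ℂ = ⟪TG v, TG v⟫_ℂ := by
    calc ⟪TF v, TF v⟫_ℂ = ⟪TF.adjoint (TF v), v⟫_ℂ :=
          (ContinuousLinearMap.adjoint_inner_left TF v (TF v)).symm
      _ = ⟪TG.adjoint (TG v), v⟫_ℂ := by rw [hcomp]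
      _ = ⟪TG v, TG v⟫_ℂ := ContinuousLinearMap.adjoint_inner_left TG v (TG v)
  rw [inner_self_eq_norm_sq_to_K, inner_self_eq_norm_sq_to_K] at h1
  exact_mod_cast h1

lemma toeplitz_head {F : ℕ → H →L[ℂ] K}
    {TF : lp (fun _ : ℕ => H) 2 →L[ℂ] lp (fun _ : ℕ => K) 2}
    (hTF : IsToeplitzOf F TF) (w : lp (fun _ : ℕ => H) 2) (v : ℕ → H) (k : ℕ)
    (hw : ∀ j, j ≤ k → w j = v j) (l : ℕ) (hl : l ≤ k) :
    (TF w) l = ∑ j ∈ Finset.range (l + 1), F (l - j) (v j) := by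
  rw [hTF w l]
  refine Finset.sum_congr rfl fun j hj => ?_
  rw [hw j (by rw [Finset.mem_range] at hj; omega)]

lemma toeplitz_fshift_tail {F : ℕ → H →L[ℂ] K}
    {TF : lp (fun _ : ℕ => H) 2 →L[ℂ] lp (fun _ : ℕ => K) 2}
    (hTF : IsToeplitzOf F TF) (u : lp (fun _ : ℕ => H) 2) (k m : ℕ) :
    (TF (fshift (k + 1) u)) (m + (k + 1)) = (TF u) m := by
  rw [hTF (fshift (k + 1) u) (m + (k + 1)), hTF u m]
  rw [show m + (k + 1) + 1 = (k + 1) + (m + 1) from by omega]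
  rw [Finset.sum_range_add]
  have hzero : ∑ x ∈ Finset.range (k + 1),
      F (m + (k + 1) - x) ((fshift (k + 1) u) x) = 0 := by
    refine Finset.sum_eq_zero fun x hx => ?_
    rw [Finset.mem_range] at hx
    rw [fshift_apply, dif_neg (by omega), map_zero]
  rw [hzero, zero_add]
  refine Finset.sum_congr rfl fun x hx => ?_
  rw [fshift_apply, dif_pos (by omega : k + 1 ≤ k + 1 + x)]
  rw [show k + 1 + x - (k + 1) = x from by omega,
    show m + (k + 1) - (k + 1 + x) = m - x from by omega]

/-- Coefficient-sum maximality of outer factors: if `F` is outer and `F*F = G*G` on the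
circle, then `∑_{i=0}^k G_i* G_i ≤ ∑_{i=0}^k F_i* F_i` and, more strongly,
`𝔊_k* 𝔊_k ≤ 𝔉_k* 𝔉_k` for the lower triangular Toeplitz sections. -/
theorem outer_coefficient_maximal (F : ℕ → H →L[ℂ] K) (G : ℕ → H →L[ℂ] L)
    (TF : lp (fun _ : ℕ => H) 2 →L[ℂ] lp (fun _ : ℕ => K) 2)
    (TG : lp (fun _ : ℕ => H) 2 →L[ℂ] lp (fun _ : ℕ => L) 2)
    (hTF : IsToeplitzOf F TF) (hTG : IsToeplitzOf G TG)
    (houter : IsSchurOfTT TF 0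
      (fun i j => if i = 0 ∧ j = 0 then (F 0).adjoint ∘L F 0 else 0))
    (heq : TF.adjoint ∘L TF = TG.adjoint ∘L TG) :
    (∀ (k : ℕ) (x : H),
      ∑ i ∈ Finset.range (k + 1), ‖G i x‖ ^ 2 ≤ ∑ i ∈ Finset.range (k + 1), ‖F i x‖ ^ 2) ∧
    ∀ (k : ℕ) (v : ℕ → H),
      ∑ l ∈ Finset.range (k + 1), ‖∑ j ∈ Finset.range (l + 1), G (l - j) (v j)‖ ^ 2 ≤
        ∑ l ∈ Finset.range (k + 1), ‖∑ j ∈ Finset.range (l + 1), F (l - j) (v j)‖ ^ 2 := by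
  have main : ∀ (k : ℕ) (v : ℕ → H),
      ∑ l ∈ Finset.range (k + 1), ‖∑ j ∈ Finset.range (l + 1), G (l - j) (v j)‖ ^ 2 ≤
        ∑ l ∈ Finset.range (k + 1), ‖∑ j ∈ Finset.range (l + 1), F (l - j) (v j)‖ ^ 2 := by
    intro k v
    refine le_of_forall_pos_le_add ?_
    intro ε hε
    obtain ⟨u, hu⟩ := mem_ranCl_iff.1
      (outer_tail_mem hTF houter (k + 1) (trunc k v)) (Real.sqrt ε) (Real.sqrt_pos.2 hε)
    set w : lp (fun _ : ℕ => H) 2 := trunc k v - fshift (k + 1) u with hwdef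
    have hwcoord : ∀ j, j ≤ k → w j = v j := by
      intro j hj
      rw [hwdef, lp.coeFn_sub, Pi.sub_apply, trunc_apply, if_pos hj, fshift_apply,
        dif_neg (by omega), sub_zero]
    have htail : btail (k + 1) (TF w) = btail (k + 1) (TF (trunc k v)) - TF u := by
      apply lp.ext
      funext m
      rw [lp.coeFn_sub, Pi.sub_apply]
      have h1 : (btail (k + 1) (TF w) : ℕ → K) m = (TF w) (m + (k + 1)) := rfl
      have h2 : (btail (k + 1) (TF (trunc k v)) : ℕ → K) m
          = (TF (trunc k v)) (m + (k + 1)) := rfl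
      rw [h1, h2, hwdef, map_sub, lp.coeFn_sub, Pi.sub_apply, toeplitz_fshift_tail hTF]
    have hG : ∑ l ∈ Finset.range (k + 1), ‖∑ j ∈ Finset.range (l + 1), G (l - j) (v j)‖ ^ 2
        = ∑ l ∈ Finset.range (k + 1), ‖(TG w) l‖ ^ 2 := by
      refine Finset.sum_congr rfl fun l hl => ?_
      rw [Finset.mem_range] at hl
      rw [toeplitz_head hTG w v k hwcoord l (by omega)]
    have hF : ∑ l ∈ Finset.range (k + 1), ‖∑ j ∈ Finset.range (l + 1), F (l - j) (v j)‖ ^ 2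
        = ∑ l ∈ Finset.range (k + 1), ‖(TF w) l‖ ^ 2 := by
      refine Finset.sum_congr rfl fun l hl => ?_
      rw [Finset.mem_range] at hl
      rw [toeplitz_head hTF w v k hwcoord l (by omega)]
    have hsq : ‖btail (k + 1) (TF w)‖ ^ 2 ≤ ε := by
      rw [htail]
      have := pow_le_pow_left₀ (norm_nonneg _) hu.le 2
      rwa [Real.sq_sqrt hε.le] at this
    have hsplitG := norm_sq_split (k + 1) (TG w)
    have hsplitF := norm_sq_split (k + 1) (TF w)
    have hnorm := norms_eq heq w
    have htailG : (0:ℝ) ≤ ‖btail (k + 1) (TG w)‖ ^ 2 := sq_nonneg _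
    rw [hG, hF]
    linarith
  refine ⟨?_, main⟩
  intro k x
  have h := main k (fun j => if j = 0 then x else 0)
  have hG : ∀ l, ∑ j ∈ Finset.range (l + 1), G (l - j) (if j = 0 then x else 0) = G l x := by
    intro l
    rw [Finset.sum_eq_single_of_mem 0 (Finset.mem_range.2 (by omega))]
    · rw [if_pos rfl, Nat.sub_zero]
    · intro b _ hb
      rw [if_neg hb, map_zero]
  have hF : ∀ l, ∑ j ∈ Finset.range (l + 1), F (l - j) (if j = 0 then x else 0) = F l x := by
    intro l
    rw [Finset.sum_eq_single_of_mem 0 (Finset.mem_range.2 (by omega))]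
    · rw [if_pos rfl, Nat.sub_zero]
    · intro b _ hb
      rw [if_neg hb, map_zero]
  simpa only [hG, hF] using h

end
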